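/- Every irreducible finite-dimensional module $V$ over $\mathfrak{q}(n) \otimes A$ ($n \geq 2$, $A$ a commutative unital $\mathbb{C}$-algebra) is a highest weight module: there is a nonzero $v \in V$ with $U(\mathfrak{q} \otimes A)v = V$, $(\mathfrak{n}^+ \otimes A)v = 0$, and $U(\mathfrak{h}_{\bar 0} \otimes A)v = \mathbb{C}v$. Moreover, the highest weight space is an irreducible $\mathfrak{h} \otimes A$-module. -/

import Mathlib

open Matrix

noncomputable section

variable (n : ℕ) (A : Type*) [CommRing A] [Algebra ℂ A]

/-- Square matrices of size `n+1` with entries in the commutative `ℂ`-algebra `A`. -/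
abbrev QMat := Matrix (Fin (n + 1)) (Fin (n + 1)) A

/-- The ambient space of pairs `(X, Y)` of matrices over `A`; a pair represents the
element of `𝔮(n) ⊗ A` with even component `X` and odd component `Y` (using the
identification of `𝔮(n) ⊗ A` with pairs of traceless `(n+1) × (n+1)` matrices over
`A`, where `(X, Y)` corresponds to the class of `[[X, Y], [Y, X]]`). -/
abbrev QPair := QMat n A × QMat n A

/-- `𝔮(n) ⊗ A`, realized as the space of pairs of traceless matrices over `A`. -/
def qA : Submodule ℂ (QPair n A) where
  carrier := {p | p.1.trace = 0 ∧ p.2.trace = 0}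
  add_mem' := by
    intro p q hp hq
    exact ⟨by simp [hp.1, hq.1], by simp [hp.2, hq.2]⟩
  zero_mem' := by simp
  smul_mem' := by
    intro c p hp
    exact ⟨by simp [hp.1], by simp [hp.2]⟩

/-- The Lie superbracket of `𝔮(n) ⊗ A` in the matrix-pair model: on even components it
is the commutator plus the anticommutator of the odd components (projected back to
traceless matrices), and on odd components it is given by the mixed commutators. -/
def qbr (p q : QPair n A) : QPair n A :=
  (p.1 * q.1 - q.1 * p.1 + p.2 * q.2 + q.2 * p.2 -
      (((n : ℂ) + 1)⁻¹ • (p.2 * q.2 + q.2 * p.2).trace) • (1 : QMat n A),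
    p.1 * q.2 - q.2 * p.1 + p.2 * q.1 - q.1 * p.2)

lemma qbr_mem (p q : QPair n A) : qbr n A p q ∈ qA n A := by
  have h1 : ((((n : ℂ) + 1)⁻¹ • (p.2 * q.2 + q.2 * p.2).trace) •
      (1 : QMat n A)).trace = (p.2 * q.2 + q.2 * p.2).trace := by
    rw [Matrix.trace_smul, Matrix.trace_one, smul_eq_mul, smul_mul_assoc]
    rw [show ((Fintype.card (Fin (n + 1)) : A)) = ((n + 1 : ℕ) : A) by simp]
    rw [← nsmul_eq_mul', ← Nat.cast_smul_eq_nsmul ℂ, smul_smul]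
    rw [show (((n + 1 : ℕ) : ℂ)) = (n : ℂ) + 1 by push_cast; ring]
    rw [inv_mul_cancel₀ (by
      exact_mod_cast Nat.cast_add_one_ne_zero (R := ℂ) n), one_smul]
  constructor
  · show (p.1 * q.1 - q.1 * p.1 + p.2 * q.2 + q.2 * p.2 -
      (((n : ℂ) + 1)⁻¹ • (p.2 * q.2 + q.2 * p.2).trace) • (1 : QMat n A)).trace = 0
    rw [Matrix.trace_sub, h1, Matrix.trace_add, Matrix.trace_add, Matrix.trace_sub,
      Matrix.trace_add, Matrix.trace_mul_comm p.1 q.1]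
    ring
  · show (p.1 * q.2 - q.2 * p.1 + p.2 * q.1 - q.1 * p.2).trace = 0
    rw [Matrix.trace_sub, Matrix.trace_add, Matrix.trace_sub,
      Matrix.trace_mul_comm p.1 q.2, Matrix.trace_mul_comm p.2 q.1]
    ring

/-- An element of the matrix-pair model is even if its odd component vanishes. -/
def IsEvenElt (p : QPair n A) : Prop := p.2 = 0

/-- An element of the matrix-pair model is odd if its even component vanishes. -/
def IsOddElt (p : QPair n A) : Prop := p.1 = 0

/-- Membership in `𝔥₀ ⊗ A`: even, with diagonal matrix component. -/
def InH0 (p : QPair n A) : Prop := p.2 = 0 ∧ p.1.IsDiag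

/-- Membership in `𝔥₁ ⊗ A`: odd, with diagonal matrix component. -/
def InH1 (p : QPair n A) : Prop := p.1 = 0 ∧ p.2.IsDiag

/-- Membership in `𝔥 ⊗ A`: both components diagonal. -/
def InH (p : QPair n A) : Prop := p.1.IsDiag ∧ p.2.IsDiag

/-- Membership in `𝔫⁺ ⊗ A`: both components strictly upper triangular. -/
def InNplus (p : QPair n A) : Prop :=
  ∀ i j : Fin (n + 1), j ≤ i → p.1 i j = 0 ∧ p.2 i j = 0

/-- Membership in `𝔮(n) ⊗ I` for an ideal `I ⊆ A`: all entries lie in `I`. -/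
def EntriesIn (I : Ideal A) (p : QPair n A) : Prop :=
  ∀ i j : Fin (n + 1), p.1 i j ∈ I ∧ p.2 i j ∈ I

/-- `𝔥₀ ⊗ A` as a subspace of the matrix-pair model of `𝔮(n) ⊗ A`: even diagonal
traceless pairs. -/
def h0A : Submodule ℂ (QPair n A) where
  carrier := {p | p.2 = 0 ∧ p.1.IsDiag ∧ p.1.trace = 0}
  add_mem' := by
    intro p q hp hq
    exact ⟨by simp [hp.1, hq.1], hp.2.1.add hq.2.1, by simp [hp.2.2, hq.2.2]⟩
  zero_mem' := ⟨rfl, Matrix.isDiag_zero, by simp⟩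
  smul_mem' := by
    intro c p hp
    exact ⟨by simp [hp.1], hp.2.1.smul c, by simp [hp.2.2]⟩

lemma h0A_le_qA : h0A n A ≤ qA n A := by
  intro p hp
  exact ⟨hp.2.2, by simp [hp.1]⟩

/-- The raw data of an action of `𝔮(n) ⊗ A` on a `ℤ₂`-graded vector space `M`: an
action map and the parity involution `P` of `M`. -/
structure QAct (M : Type*) [AddCommGroup M] [Module ℂ M] where
  act : ↥(qA n A) →ₗ[ℂ] M →ₗ[ℂ] M
  P : M →ₗ[ℂ] M

variable {M : Type*} [AddCommGroup M] [Module ℂ M]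

/-- The data `ρ` is a representation of the Lie superalgebra `𝔮(n) ⊗ A`: `P` is an
involution, commuting (resp. anticommuting) with the action of even (resp. odd)
elements, and the bracket acts by the supercommutator. -/
def QAct.IsRep (ρ : QAct n A M) : Prop :=
  (ρ.P ∘ₗ ρ.P = LinearMap.id) ∧
  (∀ x : ↥(qA n A), IsEvenElt n A ↑x → ρ.P ∘ₗ ρ.act x = ρ.act x ∘ₗ ρ.P) ∧
  (∀ x : ↥(qA n A), IsOddElt n A ↑x → ρ.P ∘ₗ ρ.act x = -(ρ.act x ∘ₗ ρ.P)) ∧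
  (∀ x y : ↥(qA n A), (IsEvenElt n A ↑x ∨ IsEvenElt n A ↑y) →
    ρ.act ⟨qbr n A ↑x ↑y, qbr_mem n A _ _⟩ = ρ.act x ∘ₗ ρ.act y - ρ.act y ∘ₗ ρ.act x) ∧
  (∀ x y : ↥(qA n A), IsOddElt n A ↑x → IsOddElt n A ↑y →
    ρ.act ⟨qbr n A ↑x ↑y, qbr_mem n A _ _⟩ = ρ.act x ∘ₗ ρ.act y + ρ.act y ∘ₗ ρ.act x)

/-- A graded submodule: stable under the action and under the parity involution. -/
def QAct.Invt (ρ : QAct n A M) (N : Submodule ℂ M) : Prop :=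
  (∀ x : ↥(qA n A), ∀ m ∈ N, ρ.act x m ∈ N) ∧ ∀ m ∈ N, ρ.P m ∈ N

/-- Irreducibility: `M ≠ 0` and the only graded invariant subspaces are `0`, `M`. -/
def QAct.Irred (ρ : QAct n A M) : Prop :=
  Nontrivial M ∧ ∀ N : Submodule ℂ M, QAct.Invt n A ρ N → N = ⊥ ∨ N = ⊤

/-- The `U(𝔮(n) ⊗ A)`-submodule of `M` generated by `v`: the smallest subspace
containing `v` and stable under the action. -/
def QAct.gen (ρ : QAct n A M) (v : M) : Submodule ℂ M :=
  sInf {N | v ∈ N ∧ ∀ x : ↥(qA n A), ∀ m ∈ N, ρ.act x m ∈ N}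

/-- `v` is a highest weight vector of `ρ` with highest weight `ψ : 𝔥₀ ⊗ A → ℂ`:
`v ≠ 0`, `v` generates `M` (i.e. `U(𝔮 ⊗ A)v = M`), `(𝔫⁺ ⊗ A)v = 0` and every element
of `𝔥₀ ⊗ A` acts on `v` by the scalar given by `ψ` (i.e. `U(𝔥₀ ⊗ A)v = ℂv`). -/
def QAct.IsHWVector (ρ : QAct n A M) (ψ : ↥(h0A n A) →ₗ[ℂ] ℂ) (v : M) : Prop :=
  v ≠ 0 ∧ QAct.gen n A ρ v = ⊤ ∧
  (∀ x : ↥(qA n A), InNplus n A ↑x → ρ.act x v = 0) ∧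
  (∀ (p : QPair n A) (hp : p ∈ h0A n A),
    ρ.act ⟨p, h0A_le_qA n A hp⟩ v = ψ ⟨p, hp⟩ • v)

/-- `ψ ∈ 𝓛(𝔥 ⊗ A)`: a functional on `𝔥₀ ⊗ A` vanishing on `𝔥₀ ⊗ I` for some
finite-codimensional ideal `I ⊆ A`. -/
def LFun (ψ : ↥(h0A n A) →ₗ[ℂ] ℂ) : Prop :=
  ∃ I : Ideal A, FiniteDimensional ℂ (A ⧸ I) ∧
    ∀ x : ↥(h0A n A), EntriesIn n A I ↑x → ψ x = 0

/-- The `ψ`-weight space `{w ∈ M | x w = ψ(x) w for all x ∈ 𝔥₀ ⊗ A}`. -/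
def hwSpace (ρ : QAct n A M) (ψ : ↥(h0A n A) →ₗ[ℂ] ℂ) : Submodule ℂ M where
  carrier := {w | ∀ (p : QPair n A) (hp : p ∈ h0A n A),
    ρ.act ⟨p, h0A_le_qA n A hp⟩ w = ψ ⟨p, hp⟩ • w}
  add_mem' := by
    intro a b ha hb p hp
    simp [map_add, ha p hp, hb p hp, smul_add]
  zero_mem' := by intro p hp; simp
  smul_mem' := by
    intro c a ha p hp
    rw [LinearMap.map_smul, ha p hp, smul_comm]


namespace HWProof

open Module Module.End Matrix

variable {n : ℕ} {A : Type*} [CommRing A] [Algebra ℂ A]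

/-- Membership in `𝔫⁻ ⊗ A`: both components strictly lower triangular. -/
def InNminus (p : QPair n A) : Prop :=
  ∀ i j : Fin (n + 1), i ≤ j → p.1 i j = 0 ∧ p.2 i j = 0

lemma isDiag_mul_apply {D X : QMat n A} (hD : D.IsDiag) (i j : Fin (n + 1)) :
    (D * X) i j = D i i * X i j := by
  rw [Matrix.mul_apply]
  exact Finset.sum_eq_single i (fun k _ hk => by rw [hD (Ne.symm hk), zero_mul])
    (fun h => absurd (Finset.mem_univ i) h)

lemma mul_isDiag_apply {D X : QMat n A} (hD : D.IsDiag) (i j : Fin (n + 1)) :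
    (X * D) i j = X i j * D j j := by
  rw [Matrix.mul_apply]
  exact Finset.sum_eq_single j (fun k _ hk => by rw [hD hk, mul_zero])
    (fun h => absurd (Finset.mem_univ j) h)

lemma isDiag_comm {D E : QMat n A} (hD : D.IsDiag) (hE : E.IsDiag) : D * E = E * D := by
  ext i j
  rw [isDiag_mul_apply hD, mul_isDiag_apply hD]
  rcases eq_or_ne i j with rfl | hij
  · ring
  · rw [hE hij, mul_zero, zero_mul]

/-- bracket of an even element with anything, explicitly. -/
lemma qbr_even_left (D : QMat n A) (q : QPair n A) :
    qbr n A (D, 0) q = (D * q.1 - q.1 * D, D * q.2 - q.2 * D) := by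
  simp [qbr]

/-- bracket of an odd element with an even element, explicitly. -/
lemma qbr_odd_left_even_right (E : QMat n A) (X : QMat n A) :
    qbr n A (0, E) (X, 0) = (0, E * X - X * E) := by
  simp [qbr, sub_eq_add_neg, add_comm]

/-- bracket of two odd elements, explicitly. -/
lemma qbr_odd_odd (E F : QMat n A) :
    qbr n A (0, E) (0, F) = (E * F + F * E -
      (((n : ℂ) + 1)⁻¹ • (E * F + F * E).trace) • (1 : QMat n A), 0) := by
  simp [qbr, sub_eq_add_neg, add_assoc]

lemma qbr_h_h {p q : QPair n A} (hp : InH n A p) (hq : InH n A q) (hp2 : p.2 = 0) :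
    qbr n A p q = 0 := by
  obtain ⟨P1, P2⟩ := p
  obtain ⟨hpd, -⟩ := hp
  simp only at hp2
  subst hp2
  rw [qbr_even_left, isDiag_comm hpd hq.1, isDiag_comm hpd hq.2]
  simp [Prod.ext_iff]


set_option linter.unusedSectionVars false

lemma sum_dreg : (∑ i : Fin (n + 1), ((n : ℂ) / 2 - ((i : ℕ) : ℂ))) = 0 := by
  have h1 : (∑ i ∈ Finset.range (n + 1), (i : ℕ)) * 2 = (n + 1) * n := by
    rw [Finset.sum_range_id_mul_two]; simp
  have h2 : (∑ i : Fin (n + 1), ((i : ℕ) : ℂ)) = ((n : ℂ) + 1) * n / 2 := by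
    rw [Fin.sum_univ_eq_sum_range (fun i => ((i : ℕ) : ℂ)) (n + 1), ← Nat.cast_sum]
    have := congrArg (Nat.cast : ℕ → ℂ) h1
    push_cast at this ⊢
    linear_combination this / 2
  rw [Finset.sum_sub_distrib, h2, Finset.sum_const, Finset.card_univ, Fintype.card_fin,
    nsmul_eq_mul]
  push_cast
  ring

/-- The regular diagonal matrix `diag(n/2, n/2 - 1, ...)`. -/
def hregM : QMat n A := Matrix.diagonal (fun i => algebraMap ℂ A ((n : ℂ) / 2 - ((i : ℕ) : ℂ)))

lemma hregM_isDiag : (hregM (n := n) (A := A)).IsDiag := Matrix.isDiag_diagonal _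

lemma hregM_trace : (hregM (n := n) (A := A)).trace = 0 := by
  rw [hregM, Matrix.trace_diagonal, ← map_sum, sum_dreg, map_zero]

/-- The regular element of `𝔥₀ ⊗ A`. -/
def hreg : QPair n A := (hregM, 0)

lemma hreg_mem_h0A : hreg ∈ h0A n A :=
  ⟨rfl, hregM_isDiag, hregM_trace⟩

/-- The regular element as an element of `𝔮(n) ⊗ A`. -/
def hregq : ↥(qA n A) := ⟨hreg, h0A_le_qA n A hreg_mem_h0A⟩

lemma hreg_even : IsEvenElt n A (hregq (n := n) (A := A) : QPair n A) := rfl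

/-- Even root-type element (with junk protection on the diagonal). -/
def eE (i j : Fin (n + 1)) (a : A) : ↥(qA n A) :=
  ⟨(Matrix.single i j (if i = j then 0 else a), 0), by
    constructor
    · rcases eq_or_ne i j with rfl | hij
      · simp
      · rw [if_neg hij]
        exact Matrix.trace_single_eq_of_ne i j a hij
    · simp⟩

/-- Odd root-type element (with junk protection on the diagonal). -/
def eO (i j : Fin (n + 1)) (a : A) : ↥(qA n A) :=
  ⟨(0, Matrix.single i j (if i = j then 0 else a)), by
    constructor
    · simp
    · rcases eq_or_ne i j with rfl | hij
      · simp
      · rw [if_neg hij]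
        exact Matrix.trace_single_eq_of_ne i j a hij⟩

lemma eE_even (i j : Fin (n + 1)) (a : A) : IsEvenElt n A ((eE i j a : QPair n A)) := rfl

lemma eO_odd (i j : Fin (n + 1)) (a : A) : IsOddElt n A ((eO i j a : QPair n A)) := rfl

lemma qbr_diag_std (d : Fin (n + 1) → ℂ) (i j : Fin (n + 1)) (c : A) :
    Matrix.diagonal (fun k => algebraMap ℂ A (d k)) * Matrix.single i j c -
      Matrix.single i j c * Matrix.diagonal (fun k => algebraMap ℂ A (d k)) =
      (d i - d j) • Matrix.single i j c := by
  ext i' j'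
  simp only [Matrix.sub_apply, Matrix.diagonal_mul, Matrix.mul_diagonal, Matrix.smul_apply,
    Matrix.single, Matrix.of_apply, Algebra.smul_def]
  split_ifs with h
  · obtain ⟨rfl, rfl⟩ := h
    rw [map_sub]
    ring
  · simp

lemma qbr_hreg_eE (i j : Fin (n + 1)) (a : A) :
    qbr n A hreg ((eE i j a : QPair n A)) =
      (((j : ℕ) : ℂ) - ((i : ℕ) : ℂ)) • ((eE i j a : QPair n A)) := by
  show qbr n A (hregM, 0) _ = _
  rw [eE, qbr_even_left]
  have := qbr_diag_std (n := n) (A := A) (fun k => (n : ℂ) / 2 - ((k : ℕ) : ℂ)) i j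
    (if i = j then 0 else a)
  rw [Prod.smul_mk]
  refine Prod.ext ?_ (by simp)
  show hregM * _ - _ * hregM = _
  rw [hregM, this]
  congr 1
  ring

lemma qbr_hreg_eO (i j : Fin (n + 1)) (a : A) :
    qbr n A hreg ((eO i j a : QPair n A)) =
      (((j : ℕ) : ℂ) - ((i : ℕ) : ℂ)) • ((eO i j a : QPair n A)) := by
  show qbr n A (hregM, 0) _ = _
  rw [eO, qbr_even_left]
  have := qbr_diag_std (n := n) (A := A) (fun k => (n : ℂ) / 2 - ((k : ℕ) : ℂ)) i j
    (if i = j then 0 else a)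
  rw [Prod.smul_mk]
  refine Prod.ext (by simp) ?_
  show hregM * _ - _ * hregM = _
  rw [hregM, this]
  congr 1
  ring

lemma qbr_hreg_h {p : QPair n A} (hp : InH n A p) : qbr n A hreg p = 0 :=
  qbr_h_h ⟨hregM_isDiag, Matrix.isDiag_zero⟩ hp rfl

section RepLemmas

variable {M : Type*} [AddCommGroup M] [Module ℂ M] {ρ : QAct n A M}

/-- Even part of an element of `𝔮(n) ⊗ A`. -/
def evenPart (x : ↥(qA n A)) : ↥(qA n A) :=
  ⟨((x : QPair n A).1, 0), ⟨x.2.1, by simp⟩⟩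

/-- Odd part of an element of `𝔮(n) ⊗ A`. -/
def oddPart (x : ↥(qA n A)) : ↥(qA n A) :=
  ⟨(0, (x : QPair n A).2), ⟨by simp, x.2.2⟩⟩

lemma evenPart_even (x : ↥(qA n A)) : IsEvenElt n A ((evenPart x : QPair n A)) := rfl

lemma oddPart_odd (x : ↥(qA n A)) : IsOddElt n A ((oddPart x : QPair n A)) := rfl

lemma even_add_odd (x : ↥(qA n A)) : evenPart x + oddPart x = x :=
  Subtype.ext (Prod.ext (by simp [evenPart, oddPart]) (by simp [evenPart, oddPart]))

/-- The regular operator `H`. -/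
def Hop (ρ : QAct n A M) : Module.End ℂ M := ρ.act hregq

variable (hrep : QAct.IsRep n A ρ)
include hrep

lemma P_P (m : M) : ρ.P (ρ.P m) = m := LinearMap.congr_fun hrep.1 m

lemma P_act_even {x : ↥(qA n A)} (hx : IsEvenElt n A ↑x) (m : M) :
    ρ.P (ρ.act x m) = ρ.act x (ρ.P m) := LinearMap.congr_fun (hrep.2.1 x hx) m

lemma P_act_odd {x : ↥(qA n A)} (hx : IsOddElt n A ↑x) (m : M) :
    ρ.P (ρ.act x m) = -ρ.act x (ρ.P m) := by
  have := LinearMap.congr_fun (hrep.2.2.1 x hx) m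
  simpa using this

lemma P_act (x : ↥(qA n A)) (m : M) :
    ρ.P (ρ.act x m) = ρ.act (evenPart x) (ρ.P m) - ρ.act (oddPart x) (ρ.P m) := by
  conv_lhs => rw [← even_add_odd x]
  rw [map_add, LinearMap.add_apply, map_add,
    P_act_even hrep (evenPart_even x), P_act_odd hrep (oddPart_odd x)]
  abel

lemma act_qbr_even_left {x : ↥(qA n A)} (hx : IsEvenElt n A ↑x) (y : ↥(qA n A)) :
    ρ.act ⟨qbr n A ↑x ↑y, qbr_mem n A _ _⟩ = ρ.act x ∘ₗ ρ.act y - ρ.act y ∘ₗ ρ.act x :=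
  hrep.2.2.2.1 x y (Or.inl hx)

lemma act_comm_of_qbr_zero {x y : ↥(qA n A)} (hx : IsEvenElt n A ↑x)
    (h0 : qbr n A ↑x ↑y = 0) : Commute (ρ.act x) (ρ.act y) := by
  have h4 := act_qbr_even_left hrep hx y
  have hz : (⟨qbr n A ↑x ↑y, qbr_mem n A _ _⟩ : ↥(qA n A)) = 0 := Subtype.ext h0
  rw [hz, map_zero] at h4
  have := sub_eq_zero.mp h4.symm
  simpa [Commute, SemiconjBy, Module.End.mul_eq_comp] using this

/-- Root vectors shift generalized eigenspaces of the regular operator. -/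
lemma act_shift (y : ↥(qA n A)) (c : ℂ) (hy : qbr n A hreg ↑y = c • (y : QPair n A))
    (μ : ℂ) {m : M} (hm : m ∈ (Hop ρ).maxGenEigenspace μ) :
    ρ.act y m ∈ (Hop ρ).maxGenEigenspace (μ + c) := by
  have h5 : Hop ρ * ρ.act y = ρ.act y * Hop ρ + c • ρ.act y := by
    have h4 := act_qbr_even_left hrep hreg_even y
    have hz : (⟨qbr n A ↑(hregq (n := n) (A := A)) ↑y, qbr_mem n A _ _⟩ : ↥(qA n A)) =
        c • y := by
      apply Subtype.ext
      simp only [Submodule.coe_smul]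
      exact hy
    rw [hz, _root_.map_smul] at h4
    have h6 : c • ρ.act y = Hop ρ * ρ.act y - ρ.act y * Hop ρ := by
      simpa [Module.End.mul_eq_comp, Hop] using h4
    rw [h6]; abel
  have key : (Hop ρ - (μ + c) • 1) * ρ.act y = ρ.act y * (Hop ρ - μ • 1) := by
    calc (Hop ρ - (μ + c) • 1) * ρ.act y = Hop ρ * ρ.act y - (μ + c) • ρ.act y := by
          rw [sub_mul, smul_mul_assoc, one_mul]
      _ = ρ.act y * Hop ρ - μ • ρ.act y := by rw [h5, add_smul]; abel
      _ = ρ.act y * (Hop ρ - μ • 1) := by rw [mul_sub, mul_smul_comm, mul_one]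
  have keypow : ∀ k : ℕ, ((Hop ρ - (μ + c) • 1) ^ k) * ρ.act y =
      ρ.act y * ((Hop ρ - μ • 1) ^ k) := by
    intro k
    induction k with
    | zero => simp
    | succ k ih => rw [pow_succ', pow_succ', mul_assoc, ih, ← mul_assoc, key, mul_assoc]
  rw [Module.End.mem_maxGenEigenspace] at hm ⊢
  obtain ⟨k, hk⟩ := hm
  refine ⟨k, ?_⟩
  have h7 := LinearMap.congr_fun (keypow k) m
  simp only [Module.End.mul_apply] at h7
  rw [h7, hk, map_zero]

end RepLemmas

section Eigen

variable {V : Type*} [AddCommGroup V] [Module ℂ V]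

/-- A commuting family of endomorphisms of a nonzero f.d. complex vector space has a
common eigenvector. -/
lemma exists_common_eigenvector [FiniteDimensional ℂ V] [Nontrivial V]
    {ι : Type*} (f : ι → Module.End ℂ V) (hcomm : ∀ i j, Commute (f i) (f j)) :
    ∃ v : V, v ≠ 0 ∧ ∀ i, ∃ c : ℂ, f i v = c • v := by
  generalize hd : Module.finrank ℂ V = d
  induction d using Nat.strong_induction_on generalizing V with
  | _ d ih =>
  by_cases hall : ∀ i μ, (f i).eigenspace μ ≠ ⊥ → (f i).eigenspace μ = ⊤
  · obtain ⟨v, hv⟩ := exists_ne (0 : V)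
    refine ⟨v, hv, fun i => ?_⟩
    obtain ⟨μ, hμ⟩ := Module.End.exists_eigenvalue (f i)
    have htop := hall i μ (by rwa [Module.End.hasEigenvalue_iff] at hμ)
    refine ⟨μ, ?_⟩
    have hvE : v ∈ (f i).eigenspace μ := htop ▸ Submodule.mem_top
    rwa [Module.End.mem_eigenspace_iff] at hvE
  · push_neg at hall
    obtain ⟨i₀, μ, hne, hnetop⟩ := hall
    have hmapsto : ∀ j, ∀ x ∈ (f i₀).eigenspace μ, f j x ∈ (f i₀).eigenspace μ := fun j =>
      Module.End.mapsTo_genEigenspace_of_comm (hcomm i₀ j) μ 1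
    set g : ι → Module.End ℂ ↥((f i₀).eigenspace μ) :=
      fun j => (f j).restrict (hmapsto j) with hg
    have hgcomm : ∀ i j, Commute (g i) (g j) := by
      intro i j
      ext x
      have h := LinearMap.congr_fun (hcomm i j) (x : V)
      simp only [Module.End.mul_apply] at h
      simp only [Module.End.mul_apply, hg, LinearMap.restrict_coe_apply]
      exact h
    have : Nontrivial ↥((f i₀).eigenspace μ) := Submodule.nontrivial_iff_ne_bot.mpr hne
    have hrank : Module.finrank ℂ ↥((f i₀).eigenspace μ) < d :=
      hd ▸ Submodule.finrank_lt hnetop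
    obtain ⟨v, hv0, hv⟩ := ih _ hrank g hgcomm rfl
    refine ⟨(v : V), by simpa using hv0, fun j => ?_⟩
    obtain ⟨c, hc⟩ := hv j
    refine ⟨c, ?_⟩
    have := congrArg (Subtype.val) hc
    simpa [hg, LinearMap.restrict_coe_apply] using this

/-- Existence of a maximal eigenvalue ladder. -/
lemma exists_max_ladder [FiniteDimensional ℂ V] [Nontrivial V] (H : Module.End ℂ V) :
    ∃ lam : ℂ, H.maxGenEigenspace lam ≠ ⊥ ∧
      ∀ k : ℕ, 0 < k → H.maxGenEigenspace (lam + k) = ⊥ := by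
  obtain ⟨μ₀, hμ₀⟩ := Module.End.exists_eigenvalue H
  have h0 : H.maxGenEigenspace μ₀ ≠ ⊥ := by
    intro h
    rw [Module.End.hasEigenvalue_iff] at hμ₀
    exact hμ₀ (le_bot_iff.mp (h ▸ Module.End.genEigenspace_le_maximal H μ₀ 1))
  have hfin : {ν : ℂ | H.maxGenEigenspace ν ≠ ⊥}.Finite :=
    WellFoundedGT.finite_ne_bot_of_iSupIndep H.independent_maxGenEigenspace
  have hSfin : {k : ℕ | H.maxGenEigenspace (μ₀ + k) ≠ ⊥}.Finite := by
    apply Set.Finite.preimage _ hfin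
    intro a _ b _ hab
    have : (a : ℂ) = b := by
      have := hab
      simp only at this
      exact add_left_cancel this
    exact_mod_cast this
  have hS0 : (0 : ℕ) ∈ {k : ℕ | H.maxGenEigenspace (μ₀ + k) ≠ ⊥} := by simpa using h0
  set F := hSfin.toFinset with hF
  have hFne : F.Nonempty := ⟨0, (Set.Finite.mem_toFinset hSfin).mpr hS0⟩
  set k0 := F.max' hFne with hk0
  refine ⟨μ₀ + k0, ?_, ?_⟩
  · exact (Set.Finite.mem_toFinset hSfin).mp (F.max'_mem hFne)
  · intro k hk
    by_contra hne
    have hcast : μ₀ + ((k0 + k : ℕ) : ℂ) = μ₀ + (k0 : ℂ) + (k : ℂ) := by push_cast; ring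
    rw [← hcast] at hne
    have hmem : (k0 + k : ℕ) ∈ F := (Set.Finite.mem_toFinset hSfin).mpr hne
    have := F.le_max' _ hmem
    omega

end Eigen

section Decomp

variable {M : Type*} [AddCommGroup M] [Module ℂ M] {ρ : QAct n A M}

lemma eE_coe (i j : Fin (n + 1)) (a : A) :
    ((eE i j a : QPair n A)) = (Matrix.single i j (if i = j then 0 else a), 0) := rfl

lemma eO_coe (i j : Fin (n + 1)) (a : A) :
    ((eO i j a : QPair n A)) = (0, Matrix.single i j (if i = j then 0 else a)) := rfl

lemma eE_zero (i j : Fin (n + 1)) : eE (n := n) (A := A) i j 0 = 0 :=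
  Subtype.ext (by simp [eE_coe, Prod.ext_iff])

lemma eO_zero (i j : Fin (n + 1)) : eO (n := n) (A := A) i j 0 = 0 :=
  Subtype.ext (by simp [eO_coe, Prod.ext_iff])

lemma matrix_decomp_offdiag (X : QMat n A) (hd : ∀ i, X i i = 0) :
    X = ∑ ij : Fin (n + 1) × Fin (n + 1),
      Matrix.single ij.1 ij.2 (if ij.1 = ij.2 then 0 else X ij.1 ij.2) := by
  calc X = ∑ i, ∑ j, Matrix.single i j (X i j) :=
        Matrix.matrix_eq_sum_single _
    _ = ∑ ij : Fin (n + 1) × Fin (n + 1),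
          Matrix.single ij.1 ij.2 (X ij.1 ij.2) := by
        rw [← Fintype.sum_prod_type']
    _ = _ := Finset.sum_congr rfl (fun ij _ => by
        rcases eq_or_ne ij.1 ij.2 with h | h
        · rw [if_pos h, ← h, hd ij.1]
        · rw [if_neg h])

lemma decomp_offdiag (x : ↥(qA n A)) (hd1 : ∀ i, (x : QPair n A).1 i i = 0)
    (hd2 : ∀ i, (x : QPair n A).2 i i = 0) :
    x = ∑ ij : Fin (n + 1) × Fin (n + 1),
      (eE ij.1 ij.2 ((x : QPair n A).1 ij.1 ij.2) +
        eO ij.1 ij.2 ((x : QPair n A).2 ij.1 ij.2)) := by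
  apply Subtype.ext
  rw [AddSubmonoidClass.coe_finset_sum]
  refine Prod.ext ?_ ?_
  · rw [Prod.fst_sum]
    simp only [Submodule.coe_add, eE_coe, eO_coe, Prod.fst_add]
    simpa using matrix_decomp_offdiag (x : QPair n A).1 hd1
  · rw [Prod.snd_sum]
    simp only [Submodule.coe_add, eE_coe, eO_coe, Prod.snd_add]
    simpa using matrix_decomp_offdiag (x : QPair n A).2 hd2

lemma act_sum (x : ↥(qA n A)) (hd1 : ∀ i, (x : QPair n A).1 i i = 0)
    (hd2 : ∀ i, (x : QPair n A).2 i i = 0) (m : M) :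
    ρ.act x m = ∑ ij : Fin (n + 1) × Fin (n + 1),
      (ρ.act (eE ij.1 ij.2 ((x : QPair n A).1 ij.1 ij.2)) m +
        ρ.act (eO ij.1 ij.2 ((x : QPair n A).2 ij.1 ij.2)) m) := by
  conv_lhs => rw [decomp_offdiag x hd1 hd2]
  rw [map_sum, LinearMap.sum_apply]
  exact Finset.sum_congr rfl (fun ij _ => by rw [map_add, LinearMap.add_apply])

variable (hrep : QAct.IsRep n A ρ)
include hrep

lemma act_nplus_zero {lam : ℂ}
    (hmax : ∀ k : ℕ, 0 < k → (Hop ρ).maxGenEigenspace (lam + k) = ⊥)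
    (x : ↥(qA n A)) (hx : InNplus n A ↑x) {m : M}
    (hm : m ∈ (Hop ρ).maxGenEigenspace lam) : ρ.act x m = 0 := by
  have hd1 : ∀ i, (x : QPair n A).1 i i = 0 := fun i => (hx i i le_rfl).1
  have hd2 : ∀ i, (x : QPair n A).2 i i = 0 := fun i => (hx i i le_rfl).2
  rw [act_sum x hd1 hd2]
  apply Finset.sum_eq_zero
  rintro ⟨i, j⟩ -
  rcases le_or_gt j i with hij | hij
  · rw [(hx i j hij).1, (hx i j hij).2, eE_zero, eO_zero, _root_.map_zero]
    simp
  · have hij' : (i : ℕ) < (j : ℕ) := hij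
    have hc : ((j : ℕ) : ℂ) - ((i : ℕ) : ℂ) = (((j : ℕ) - (i : ℕ) : ℕ) : ℂ) := by
      rw [Nat.cast_sub (le_of_lt hij')]
    have hE := act_shift hrep (eE i j ((x : QPair n A).1 i j)) _
      (qbr_hreg_eE i j ((x : QPair n A).1 i j)) lam hm
    have hO := act_shift hrep (eO i j ((x : QPair n A).2 i j)) _
      (qbr_hreg_eO i j ((x : QPair n A).2 i j)) lam hm
    rw [hc, hmax ((j : ℕ) - (i : ℕ)) (by omega), Submodule.mem_bot] at hE hO
    rw [hE, hO, add_zero]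

/-- The sum of the non-top generalized eigenspaces. -/
def Mlow (ρ : QAct n A M) (lam : ℂ) : Submodule ℂ M :=
  ⨆ (ν : ℂ) (_ : ν ≠ lam), (Hop ρ).maxGenEigenspace ν

lemma act_nminus_mem_Mlow {lam : ℂ}
    (hmax : ∀ k : ℕ, 0 < k → (Hop ρ).maxGenEigenspace (lam + k) = ⊥)
    (x : ↥(qA n A)) (hx : InNminus (x : QPair n A)) (μ : ℂ) {m : M}
    (hm : m ∈ (Hop ρ).maxGenEigenspace μ) : ρ.act x m ∈ Mlow ρ lam := by
  by_cases hm0 : m = 0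
  · rw [hm0, _root_.map_zero]; exact Submodule.zero_mem _
  have hd1 : ∀ i, (x : QPair n A).1 i i = 0 := fun i => (hx i i le_rfl).1
  have hd2 : ∀ i, (x : QPair n A).2 i i = 0 := fun i => (hx i i le_rfl).2
  rw [act_sum x hd1 hd2]
  apply Submodule.sum_mem
  rintro ⟨i, j⟩ -
  rcases le_or_gt i j with hij | hij
  · rw [(hx i j hij).1, (hx i j hij).2, eE_zero, eO_zero, _root_.map_zero]
    simp
  · have hij' : (j : ℕ) < (i : ℕ) := hij
    have hE := act_shift hrep (eE i j ((x : QPair n A).1 i j)) _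
      (qbr_hreg_eE i j ((x : QPair n A).1 i j)) μ hm
    have hO := act_shift hrep (eO i j ((x : QPair n A).2 i j)) _
      (qbr_hreg_eO i j ((x : QPair n A).2 i j)) μ hm
    by_cases hν : μ + (((j : ℕ) : ℂ) - ((i : ℕ) : ℂ)) = lam
    · exfalso
      apply hm0
      have hμeq : μ = lam + ((((i : ℕ) - (j : ℕ) : ℕ)) : ℂ) := by
        rw [Nat.cast_sub (le_of_lt hij')]
        linear_combination hν
      rw [hμeq, hmax (((i : ℕ) - (j : ℕ))) (by omega), Submodule.mem_bot] at hm
      exact hm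
    · exact add_mem
        (Submodule.mem_iSup_of_mem _ (Submodule.mem_iSup_of_mem hν hE))
        (Submodule.mem_iSup_of_mem _ (Submodule.mem_iSup_of_mem hν hO))

omit hrep in
lemma qbr_h0_h {p q : QPair n A} (hp : p ∈ h0A n A) (hq : InH n A q) :
    qbr n A p q = 0 :=
  qbr_h_h ⟨hp.2.1, hp.1 ▸ Matrix.isDiag_zero⟩ hq hp.1

lemma act_h0_comm {p : QPair n A} (hp : p ∈ h0A n A) {x : ↥(qA n A)} (hx : InH n A ↑x) :
    Commute (ρ.act ⟨p, h0A_le_qA n A hp⟩) (ρ.act x) :=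
  act_comm_of_qbr_zero hrep (hp.1) (qbr_h0_h hp hx)

lemma hwSpace_stable_H (ψ : ↥(h0A n A) →ₗ[ℂ] ℂ) :
    ∀ x : ↥(qA n A), InH n A ↑x → ∀ w ∈ hwSpace n A ρ ψ, ρ.act x w ∈ hwSpace n A ρ ψ := by
  intro x hx w hw p hp
  have hcomm := act_h0_comm hrep hp hx
  have h1 := LinearMap.congr_fun hcomm w
  simp only [Module.End.mul_apply] at h1
  rw [h1, hw p hp, _root_.map_smul]

lemma hwSpace_stable_P (ψ : ↥(h0A n A) →ₗ[ℂ] ℂ) :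
    ∀ w ∈ hwSpace n A ρ ψ, ρ.P w ∈ hwSpace n A ρ ψ := by
  intro w hw p hp
  rw [← P_act_even hrep (x := ⟨p, h0A_le_qA n A hp⟩) hp.1 w, hw p hp, _root_.map_smul]

end Decomp

section Tri

variable {M : Type*} [AddCommGroup M] [Module ℂ M] {ρ : QAct n A M}

/-- Strictly upper triangular part. -/
def upT (X : QMat n A) : QMat n A := Matrix.of fun i j => if i < j then X i j else 0

/-- Strictly lower triangular part. -/
def loT (X : QMat n A) : QMat n A := Matrix.of fun i j => if j < i then X i j else 0

/-- Diagonal part. -/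
def dgT (X : QMat n A) : QMat n A := Matrix.of fun i j => if i = j then X i j else 0

lemma upT_trace (X : QMat n A) : (upT X).trace = 0 := by
  apply Finset.sum_eq_zero
  intro i _
  simp [upT, Matrix.diag]

lemma loT_trace (X : QMat n A) : (loT X).trace = 0 := by
  apply Finset.sum_eq_zero
  intro i _
  simp [loT, Matrix.diag]

lemma dgT_trace (X : QMat n A) : (dgT X).trace = X.trace := by
  apply Finset.sum_congr rfl
  intro i _
  simp [dgT, Matrix.diag]

lemma dgT_isDiag (X : QMat n A) : (dgT X).IsDiag := by
  intro i j hij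
  simp [dgT, hij]

lemma tri_sum (X : QMat n A) : upT X + dgT X + loT X = X := by
  ext i j
  rcases lt_trichotomy i j with h | h | h
  · simp [upT, dgT, loT, Matrix.add_apply, h, h.ne, h.asymm]
  · simp [upT, dgT, loT, Matrix.add_apply, h]
  · simp [upT, dgT, loT, Matrix.add_apply, h, (ne_of_gt h), h.asymm]

/-- Upper part of an element of `𝔮 ⊗ A`. -/
def xR (x : ↥(qA n A)) : ↥(qA n A) :=
  ⟨(upT (x : QPair n A).1, upT (x : QPair n A).2), ⟨upT_trace _, upT_trace _⟩⟩

def xH (x : ↥(qA n A)) : ↥(qA n A) :=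
  ⟨(dgT (x : QPair n A).1, dgT (x : QPair n A).2), by
    constructor
    · rw [dgT_trace]; exact x.2.1
    · rw [dgT_trace]; exact x.2.2⟩

def xL (x : ↥(qA n A)) : ↥(qA n A) :=
  ⟨(loT (x : QPair n A).1, loT (x : QPair n A).2), ⟨loT_trace _, loT_trace _⟩⟩

lemma xR_nplus (x : ↥(qA n A)) : InNplus n A ↑(xR x) := by
  intro i j hij
  constructor <;> simp [xR, upT, hij.not_gt]

lemma xH_inH (x : ↥(qA n A)) : InH n A ↑(xH x) :=
  ⟨dgT_isDiag _, dgT_isDiag _⟩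

lemma xL_nminus (x : ↥(qA n A)) : InNminus ((xL x : QPair n A)) := by
  intro i j hij
  constructor <;> simp [xL, loT, hij]

lemma tri_decomp (x : ↥(qA n A)) : xR x + xH x + xL x = x := by
  apply Subtype.ext
  refine Prod.ext ?_ ?_ <;>
    simpa [xR, xH, xL] using tri_sum _

lemma evenPart_nplus {x : ↥(qA n A)} (hx : InNplus n A ↑x) : InNplus n A ↑(evenPart x) := by
  intro i j hij
  exact ⟨(hx i j hij).1, rfl⟩

lemma oddPart_nplus {x : ↥(qA n A)} (hx : InNplus n A ↑x) : InNplus n A ↑(oddPart x) := by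
  intro i j hij
  exact ⟨rfl, (hx i j hij).2⟩

lemma evenPart_nminus {x : ↥(qA n A)} (hx : InNminus (x : QPair n A)) :
    InNminus ((evenPart x : QPair n A)) := by
  intro i j hij
  exact ⟨(hx i j hij).1, rfl⟩

lemma oddPart_nminus {x : ↥(qA n A)} (hx : InNminus (x : QPair n A)) :
    InNminus ((oddPart x : QPair n A)) := by
  intro i j hij
  exact ⟨rfl, (hx i j hij).2⟩

lemma evenPart_inH {x : ↥(qA n A)} (hx : InH n A ↑x) : InH n A ↑(evenPart x) :=
  ⟨hx.1, Matrix.isDiag_zero⟩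

lemma oddPart_inH {x : ↥(qA n A)} (hx : InH n A ↑x) : InH n A ↑(oddPart x) :=
  ⟨Matrix.isDiag_zero, hx.2⟩

lemma qbr_h_nminus {p q : QPair n A} (hp : InH n A p) (hq : InNminus q) :
    InNminus (qbr n A p q) := by
  have htr : (p.2 * q.2 + q.2 * p.2).trace = 0 := by
    apply Finset.sum_eq_zero
    intro k _
    have h1 : (p.2 * q.2) k k = p.2 k k * q.2 k k := isDiag_mul_apply hp.2 k k
    have h2 : (q.2 * p.2) k k = q.2 k k * p.2 k k := mul_isDiag_apply hp.2 k k
    simp [Matrix.diag, Matrix.add_apply, h1, h2, (hq k k le_rfl).2]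
  intro i j hij
  constructor
  · show (p.1 * q.1 - q.1 * p.1 + p.2 * q.2 + q.2 * p.2 -
      (((n : ℂ) + 1)⁻¹ • (p.2 * q.2 + q.2 * p.2).trace) • (1 : QMat n A)) i j = 0
    rw [htr]
    simp [Matrix.sub_apply, Matrix.add_apply, isDiag_mul_apply hp.1,
      isDiag_mul_apply hp.2, mul_isDiag_apply hp.1, mul_isDiag_apply hp.2,
      (hq i j hij).1, (hq i j hij).2]
  · show (p.1 * q.2 - q.2 * p.1 + p.2 * q.1 - q.1 * p.2) i j = 0
    simp [Matrix.sub_apply, Matrix.add_apply, isDiag_mul_apply hp.1,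
      isDiag_mul_apply hp.2, mul_isDiag_apply hp.1, mul_isDiag_apply hp.2,
      (hq i j hij).1, (hq i j hij).2]

variable (hrep : QAct.IsRep n A ρ)
include hrep

lemma act_swap {e f : ↥(qA n A)}
    (hpar : IsEvenElt n A ↑e ∨ IsEvenElt n A ↑f ∨ (IsOddElt n A ↑e ∧ IsOddElt n A ↑f))
    (m : M) :
    ∃ s : ℂ, (s = 1 ∨ s = -1) ∧
      ρ.act e (ρ.act f m) = s • ρ.act f (ρ.act e m) +
        ρ.act ⟨qbr n A ↑e ↑f, qbr_mem n A _ _⟩ m := by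
  rcases hpar with he | hf | ⟨he, hf⟩
  · refine ⟨1, Or.inl rfl, ?_⟩
    have h4 := LinearMap.congr_fun (hrep.2.2.2.1 e f (Or.inl he)) m
    simp only [LinearMap.sub_apply, LinearMap.comp_apply] at h4
    rw [h4, one_smul]
    abel
  · refine ⟨1, Or.inl rfl, ?_⟩
    have h4 := LinearMap.congr_fun (hrep.2.2.2.1 e f (Or.inr hf)) m
    simp only [LinearMap.sub_apply, LinearMap.comp_apply] at h4
    rw [h4, one_smul]
    abel
  · refine ⟨-1, Or.inr rfl, ?_⟩
    have h4 := LinearMap.congr_fun (hrep.2.2.2.2 e f he hf) m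
    simp only [LinearMap.add_apply, LinearMap.comp_apply] at h4
    rw [h4, neg_one_smul]
    abel

end Tri

section Chain

variable {M : Type*} [AddCommGroup M] [Module ℂ M] {ρ : QAct n A M}

lemma act_tri (x : ↥(qA n A)) (w : M) :
    ρ.act x w = ρ.act (xR x) w + ρ.act (xH x) w + ρ.act (xL x) w := by
  conv_lhs => rw [← tri_decomp x]
  simp only [map_add, LinearMap.add_apply]

lemma hw_sup_mlow_eq_top (hrep : QAct.IsRep n A ρ) (hirr : QAct.Irred n A ρ) {lam : ℂ}
    (hmax : ∀ k : ℕ, 0 < k → (Hop ρ).maxGenEigenspace (lam + k) = ⊥)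
    (N : Submodule ℂ M) (hNbot : N ≠ ⊥)
    (hNle : N ≤ (Hop ρ).maxGenEigenspace lam)
    (hNH : ∀ x : ↥(qA n A), InH n A ↑x → ∀ w ∈ N, ρ.act x w ∈ N)
    (hNP : ∀ w ∈ N, ρ.P w ∈ N) :
    N ⊔ Mlow ρ lam = ⊤ := by
  classical
  set Y : ℕ → Submodule ℂ M := fun m => Nat.rec N (fun _ Z =>
    Z ⊔ ⨆ (f : ↥(qA n A)) (_ : InNminus (f : QPair n A)), Z.map (ρ.act f)) m with hYdef
  have hY0 : Y 0 = N := rfl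
  have hYs : ∀ m, Y (m + 1) =
      Y m ⊔ ⨆ (f : ↥(qA n A)) (_ : InNminus (f : QPair n A)), (Y m).map (ρ.act f) :=
    fun m => rfl
  have hmono : Monotone Y := monotone_nat_of_le_succ (fun m => by rw [hYs]; exact le_sup_left)
  have hmem_f : ∀ m (f : ↥(qA n A)), InNminus (f : QPair n A) →
      ∀ y ∈ Y m, ρ.act f y ∈ Y (m + 1) := by
    intro m f hf y hy
    rw [hYs]
    exact Submodule.mem_sup_right
      (Submodule.mem_iSup_of_mem f (Submodule.mem_iSup_of_mem hf (Submodule.mem_map_of_mem hy)))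
  have key : ∀ m (T : M →ₗ[ℂ] M), (∀ y ∈ Y m, T y ∈ Y (m + 1)) →
      (∀ f : ↥(qA n A), InNminus (f : QPair n A) → ∀ y ∈ Y m, T (ρ.act f y) ∈ Y (m + 1)) →
      ∀ y ∈ Y (m + 1), T y ∈ Y (m + 1) := by
    intro m T h1 h2 y hy
    rw [hYs] at hy
    have hle : Y m ⊔ (⨆ (f : ↥(qA n A)) (_ : InNminus (f : QPair n A)), (Y m).map (ρ.act f)) ≤
        Submodule.comap T (Y (m + 1)) := by
      apply sup_le
      · intro z hz
        exact h1 z hz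
      · apply iSup_le
        intro f
        apply iSup_le
        intro hf
        rintro _ ⟨z, hz, rfl⟩
        exact h2 f hf z hz
    exact hle hy
  have hMlowStable : ∀ (f : ↥(qA n A)), InNminus (f : QPair n A) →
      ∀ b ∈ Mlow ρ lam, ρ.act f b ∈ Mlow ρ lam := by
    intro f hf b hb
    have hle : Mlow ρ lam ≤ Submodule.comap (ρ.act f) (Mlow ρ lam) := by
      apply iSup_le
      intro ν
      apply iSup_le
      intro hν
      intro z hz
      exact act_nminus_mem_Mlow hrep hmax f hf ν hz
    exact hle hb
  have stab : ∀ m,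
      (∀ e : ↥(qA n A), InNplus n A ↑e → ∀ y ∈ Y m, ρ.act e y ∈ Y m) ∧
      (∀ h : ↥(qA n A), InH n A ↑h → ∀ y ∈ Y m, ρ.act h y ∈ Y m) ∧
      (∀ y ∈ Y m, ρ.P y ∈ Y m) ∧
      (Y m ≤ N ⊔ Mlow ρ lam) := by
    intro m
    induction m with
    | zero =>
      refine ⟨?_, ?_, hNP, le_sup_left⟩
      · intro e he y hy
        rw [act_nplus_zero hrep hmax e he (hNle hy)]
        exact N.zero_mem
      · exact hNH
    | succ m ih =>
      obtain ⟨ihR, ihH, ihP, ihLow⟩ := ih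
      have hbrkt : ∀ (z : ↥(qA n A)), ∀ y ∈ Y m, ρ.act z y ∈ Y (m + 1) := by
        intro z y hy
        rw [act_tri z y]
        refine add_mem (add_mem ?_ ?_) ?_
        · exact hmono (Nat.le_succ m) (ihR (xR z) (xR_nplus z) y hy)
        · exact hmono (Nat.le_succ m) (ihH (xH z) (xH_inH z) y hy)
        · exact hmem_f m (xL z) (xL_nminus z) y hy
      have hcalcR : ∀ (ep fq : ↥(qA n A)), InNplus n A ↑ep → InNminus (fq : QPair n A) →
          (IsEvenElt n A ↑ep ∨ IsEvenElt n A ↑fq ∨ (IsOddElt n A ↑ep ∧ IsOddElt n A ↑fq)) →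
          ∀ y ∈ Y m, ρ.act ep (ρ.act fq y) ∈ Y (m + 1) := by
        intro ep fq hep hfq hpar y hy
        obtain ⟨s, -, hsw⟩ := act_swap hrep hpar y
        rw [hsw]
        refine add_mem (Submodule.smul_mem _ s ?_) ?_
        · exact hmem_f m fq hfq _ (ihR ep hep y hy)
        · exact hbrkt _ y hy
      have hcalcH : ∀ (hp fq : ↥(qA n A)), InH n A ↑hp → InNminus (fq : QPair n A) →
          (IsEvenElt n A ↑hp ∨ IsEvenElt n A ↑fq ∨ (IsOddElt n A ↑hp ∧ IsOddElt n A ↑fq)) →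
          ∀ y ∈ Y m, ρ.act hp (ρ.act fq y) ∈ Y (m + 1) := by
        intro hp fq hhp hfq hpar y hy
        obtain ⟨s, -, hsw⟩ := act_swap hrep hpar y
        rw [hsw]
        refine add_mem (Submodule.smul_mem _ s ?_) ?_
        · exact hmem_f m fq hfq _ (ihH hp hhp y hy)
        · exact hmem_f m ⟨qbr n A ↑hp ↑fq, qbr_mem n A _ _⟩ (qbr_h_nminus hhp hfq) y hy
      refine ⟨?_, ?_, ?_, ?_⟩
      · intro e he
        apply key m (ρ.act e)
        · intro y hy
          exact hmono (Nat.le_succ m) (ihR e he y hy)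
        · intro f hf y hy
          have hsplit : ρ.act e (ρ.act f y) =
              (ρ.act (evenPart e) (ρ.act (evenPart f) y) +
                ρ.act (oddPart e) (ρ.act (evenPart f) y)) +
              (ρ.act (evenPart e) (ρ.act (oddPart f) y) +
                ρ.act (oddPart e) (ρ.act (oddPart f) y)) := by
            conv_lhs => rw [← even_add_odd e, ← even_add_odd f]
            simp only [map_add, LinearMap.add_apply]
            try abel
          rw [hsplit]
          refine add_mem (add_mem ?_ ?_) (add_mem ?_ ?_)
          · exact hcalcR _ _ (evenPart_nplus he) (evenPart_nminus hf)
              (Or.inl (evenPart_even e)) y hy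
          · exact hcalcR _ _ (oddPart_nplus he) (evenPart_nminus hf)
              (Or.inr (Or.inl (evenPart_even f))) y hy
          · exact hcalcR _ _ (evenPart_nplus he) (oddPart_nminus hf)
              (Or.inl (evenPart_even e)) y hy
          · exact hcalcR _ _ (oddPart_nplus he) (oddPart_nminus hf)
              (Or.inr (Or.inr ⟨oddPart_odd e, oddPart_odd f⟩)) y hy
      · intro h hh
        apply key m (ρ.act h)
        · intro y hy
          exact hmono (Nat.le_succ m) (ihH h hh y hy)
        · intro f hf y hy
          have hsplit : ρ.act h (ρ.act f y) =
              (ρ.act (evenPart h) (ρ.act (evenPart f) y) +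
                ρ.act (oddPart h) (ρ.act (evenPart f) y)) +
              (ρ.act (evenPart h) (ρ.act (oddPart f) y) +
                ρ.act (oddPart h) (ρ.act (oddPart f) y)) := by
            conv_lhs => rw [← even_add_odd h, ← even_add_odd f]
            simp only [map_add, LinearMap.add_apply]
            try abel
          rw [hsplit]
          refine add_mem (add_mem ?_ ?_) (add_mem ?_ ?_)
          · exact hcalcH _ _ (evenPart_inH hh) (evenPart_nminus hf)
              (Or.inl (evenPart_even h)) y hy
          · exact hcalcH _ _ (oddPart_inH hh) (evenPart_nminus hf)
              (Or.inr (Or.inl (evenPart_even f))) y hy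
          · exact hcalcH _ _ (evenPart_inH hh) (oddPart_nminus hf)
              (Or.inl (evenPart_even h)) y hy
          · exact hcalcH _ _ (oddPart_inH hh) (oddPart_nminus hf)
              (Or.inr (Or.inr ⟨oddPart_odd h, oddPart_odd f⟩)) y hy
      · apply key m ρ.P
        · intro y hy
          exact hmono (Nat.le_succ m) (ihP y hy)
        · intro f hf y hy
          rw [P_act hrep f y]
          refine sub_mem ?_ ?_
          · exact hmem_f m (evenPart f) (evenPart_nminus hf) _ (ihP y hy)
          · exact hmem_f m (oddPart f) (oddPart_nminus hf) _ (ihP y hy)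
      · rw [hYs]
        apply sup_le ihLow
        apply iSup_le
        intro f
        apply iSup_le
        intro hf
        rintro _ ⟨z, hz, rfl⟩
        have hz' := ihLow hz
        rw [Submodule.mem_sup] at hz'
        obtain ⟨a, ha, b, hb, rfl⟩ := hz'
        rw [map_add]
        refine add_mem (Submodule.mem_sup_right ?_) (Submodule.mem_sup_right ?_)
        · exact act_nminus_mem_Mlow hrep hmax f hf lam (hNle ha)
        · exact hMlowStable f hf b hb
  have hchain : ∀ w : M, (w ∈ ⨆ m, Y m) ↔ ∃ m, w ∈ Y m := fun w =>
    Submodule.mem_iSup_of_chain (⟨Y, hmono⟩ : ℕ →o Submodule ℂ M) w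
  have hinvt : QAct.Invt n A ρ (⨆ m, Y m) := by
    constructor
    · intro x w hw
      obtain ⟨m, hm⟩ := (hchain w).mp hw
      rw [act_tri x w]
      refine add_mem (add_mem ?_ ?_) ?_
      · exact (hchain _).mpr ⟨m, (stab m).1 (xR x) (xR_nplus x) w hm⟩
      · exact (hchain _).mpr ⟨m, (stab m).2.1 (xH x) (xH_inH x) w hm⟩
      · exact (hchain _).mpr ⟨m + 1, hmem_f m (xL x) (xL_nminus x) w hm⟩
    · intro w hw
      obtain ⟨m, hm⟩ := (hchain w).mp hw
      exact (hchain _).mpr ⟨m, (stab m).2.2.1 w hm⟩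
  rcases hirr.2 _ hinvt with hbot | htop
  · exfalso
    apply hNbot
    have : N ≤ ⨆ m, Y m := le_trans (le_of_eq hY0.symm) (le_iSup Y 0)
    rw [hbot] at this
    exact le_bot_iff.mp this
  · have hle : (⨆ m, Y m) ≤ N ⊔ Mlow ρ lam := iSup_le (fun m => (stab m).2.2.2)
    rw [htop] at hle
    exact eq_top_iff.mpr hle

end Chain
end HWProof

open HWProof in
/-- Every irreducible finite-dimensional `𝔮(n) ⊗ A`-module is a highest weight module;
moreover the highest weight space is an irreducible `𝔥 ⊗ A`-module (it is stable under
the action of `𝔥 ⊗ A` and the parity involution, and has no nontrivial proper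
subspace with these stabilities). -/
theorem irred_fd_is_highest_weight (hn : 2 ≤ n)
    [FiniteDimensional ℂ M] (ρ : QAct n A M)
    (hrep : QAct.IsRep n A ρ) (hirr : QAct.Irred n A ρ) :
    ∃ (ψ : ↥(h0A n A) →ₗ[ℂ] ℂ) (v : M),
      QAct.IsHWVector n A ρ ψ v ∧
      (∀ x : ↥(qA n A), InH n A ↑x → ∀ w ∈ hwSpace n A ρ ψ, ρ.act x w ∈ hwSpace n A ρ ψ) ∧
      (∀ w ∈ hwSpace n A ρ ψ, ρ.P w ∈ hwSpace n A ρ ψ) ∧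
      (∀ N : Submodule ℂ M, N ≤ hwSpace n A ρ ψ →
        (∀ x : ↥(qA n A), InH n A ↑x → ∀ w ∈ N, ρ.act x w ∈ N) →
        (∀ w ∈ N, ρ.P w ∈ N) → N = ⊥ ∨ N = hwSpace n A ρ ψ) := by
  classical
  haveI hnontriv : Nontrivial M := hirr.1
  obtain ⟨lam, hlamne, hmax⟩ := exists_max_ladder (Hop ρ)
  set U : Submodule ℂ M := (Hop ρ).maxGenEigenspace lam with hU
  set inc : ↥(h0A n A) →ₗ[ℂ] ↥(qA n A) := Submodule.inclusion (h0A_le_qA n A) with hinc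
  have hinH : ∀ h : ↥(h0A n A), InH n A ((inc h : QPair n A)) := by
    intro h
    exact ⟨h.2.2.1, h.2.1 ▸ Matrix.isDiag_zero⟩
  have hcommM : ∀ h h' : ↥(h0A n A), Commute (ρ.act (inc h)) (ρ.act (inc h')) := by
    intro h h'
    exact act_comm_of_qbr_zero hrep h.2.1 (qbr_h0_h h.2 (hinH h'))
  have hcommH : ∀ h : ↥(h0A n A), Commute (Hop ρ) (ρ.act (inc h)) := by
    intro h
    exact act_comm_of_qbr_zero hrep hreg_even (qbr_hreg_h (hinH h))
  have hmapsU : ∀ h : ↥(h0A n A), ∀ x ∈ U, ρ.act (inc h) x ∈ U := by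
    intro h
    exact Module.End.mapsTo_maxGenEigenspace_of_comm (hcommH h) lam
  haveI hUnt : Nontrivial ↥U := Submodule.nontrivial_iff_ne_bot.mpr hlamne
  set g : ↥(h0A n A) → Module.End ℂ ↥U := fun h => (ρ.act (inc h)).restrict (hmapsU h) with hg
  have hgcomm : ∀ h h', Commute (g h) (g h') := by
    intro h h'
    ext x
    have hcm := LinearMap.congr_fun (hcommM h h') (x : M)
    simp only [Module.End.mul_apply] at hcm
    simp only [Module.End.mul_apply, hg, LinearMap.restrict_coe_apply]
    exact hcm
  obtain ⟨w0, hw0ne, hw0⟩ := exists_common_eigenvector g hgcomm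
  set w : M := (w0 : M) with hwdef
  have hwU : w ∈ U := w0.2
  have hwne : w ≠ 0 := by simpa [hwdef] using hw0ne
  have hwEig : ∀ h : ↥(h0A n A), ∃ c : ℂ, ρ.act (inc h) w = c • w := by
    intro h
    obtain ⟨c, hc⟩ := hw0 h
    refine ⟨c, ?_⟩
    have := congrArg (Subtype.val) hc
    simpa [hg, LinearMap.restrict_coe_apply] using this
  obtain ⟨φ, hφ⟩ : ∃ φ : Module.Dual ℂ M, φ w ≠ 0 := by
    by_contra hcon
    push_neg at hcon
    exact hwne ((Module.forall_dual_apply_eq_zero_iff ℂ w).mp hcon)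
  set φ' : Module.Dual ℂ M := (φ w)⁻¹ • φ with hφ'
  have hφ'w : φ' w = 1 := by
    simp [hφ', inv_mul_cancel₀ hφ]
  set ψ : ↥(h0A n A) →ₗ[ℂ] ℂ := φ' ∘ₗ ((ρ.act.flip w) ∘ₗ inc) with hψdef
  have hψ : ∀ h : ↥(h0A n A), ρ.act (inc h) w = ψ h • w := by
    intro h
    obtain ⟨c, hc⟩ := hwEig h
    have hval : ψ h = c := by
      simp only [hψdef, LinearMap.comp_apply, LinearMap.flip_apply]
      rw [hc, _root_.map_smul, hφ'w, smul_eq_mul, mul_one]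
    rw [hval, hc]
  have hww : w ∈ hwSpace n A ρ ψ := by
    intro p hp
    exact hψ ⟨p, hp⟩
  set hregH : ↥(h0A n A) := ⟨hreg, hreg_mem_h0A⟩ with hregHdef
  have hHw : Hop ρ w = ψ hregH • w := hψ hregH
  have hψlam : ψ hregH = lam := by
    by_contra hne
    obtain ⟨k, hk⟩ := (Module.End.mem_maxGenEigenspace _ _ _).mp hwU
    have hpow : ∀ k : ℕ, ((Hop ρ - lam • 1) ^ k) w = (ψ hregH - lam) ^ k • w := by
      intro k
      induction k with
      | zero => simp
      | succ k ih =>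
        rw [pow_succ', Module.End.mul_apply, ih, _root_.map_smul]
        have hstep : (Hop ρ - lam • 1) w = (ψ hregH - lam) • w := by
          simp only [LinearMap.sub_apply, LinearMap.smul_apply, Module.End.one_apply, hHw,
            sub_smul]
        rw [hstep, smul_smul, ← pow_succ]
    rw [hpow k] at hk
    rcases smul_eq_zero.mp hk with h | h
    · exact hne (sub_eq_zero.mp (pow_eq_zero_iff'.mp h).1)
    · exact hwne h
  have hwsU : hwSpace n A ρ ψ ≤ U := by
    intro u hu
    have h2 := hu hreg hreg_mem_h0A
    rw [hψlam] at h2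
    rw [hU, Module.End.mem_maxGenEigenspace]
    refine ⟨1, ?_⟩
    rw [pow_one]
    simp only [LinearMap.sub_apply, LinearMap.smul_apply, Module.End.one_apply]
    rw [show Hop ρ u = lam • u from h2, sub_self]
  have hwP : ∀ u ∈ hwSpace n A ρ ψ, ρ.P u ∈ hwSpace n A ρ ψ := hwSpace_stable_P hrep ψ
  obtain ⟨v, hv0, hvhw, hPv⟩ :
      ∃ v : M, v ≠ 0 ∧ v ∈ hwSpace n A ρ ψ ∧ (ρ.P v = v ∨ ρ.P v = -v) := by
    by_cases hPw : ρ.P w + w = 0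
    · exact ⟨w, hwne, hww, Or.inr (eq_neg_of_add_eq_zero_left hPw)⟩
    · refine ⟨ρ.P w + w, hPw, add_mem (hwP w hww) hww, Or.inl ?_⟩
      rw [map_add, P_P hrep w]
      abel
  have hgen_mem : v ∈ QAct.gen n A ρ v := by
    rw [QAct.gen, Submodule.mem_sInf]
    exact fun N hN => hN.1
  have hgen_act : ∀ x : ↥(qA n A), ∀ m ∈ QAct.gen n A ρ v, ρ.act x m ∈ QAct.gen n A ρ v := by
    intro x m hm
    rw [QAct.gen, Submodule.mem_sInf] at hm ⊢
    intro N hN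
    exact hN.2 x m (hm N hN)
  have hgen_P : ∀ m ∈ QAct.gen n A ρ v, ρ.P m ∈ QAct.gen n A ρ v := by
    have hcomap : QAct.gen n A ρ v ≤ Submodule.comap ρ.P (QAct.gen n A ρ v) := by
      apply sInf_le
      constructor
      · rcases hPv with h | h
        · rw [Submodule.mem_comap, h]; exact hgen_mem
        · rw [Submodule.mem_comap, h]; exact neg_mem hgen_mem
      · intro x m hm
        rw [Submodule.mem_comap] at hm ⊢
        rw [P_act hrep x m]
        exact sub_mem (hgen_act _ _ hm) (hgen_act _ _ hm)
    exact fun m hm => hcomap hm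
  have hgen_top : QAct.gen n A ρ v = ⊤ := by
    rcases hirr.2 _ ⟨hgen_act, hgen_P⟩ with h | h
    · exact absurd (h ▸ hgen_mem) (by simpa using hv0)
    · exact h
  refine ⟨ψ, v, ⟨hv0, hgen_top, ?_, fun p hp => hvhw p hp⟩,
    hwSpace_stable_H hrep ψ, hwP, ?_⟩
  · intro x hx
    exact act_nplus_zero hrep hmax x hx (hwsU hvhw)
  · intro N hNle hNH hNP
    by_cases hNbot : N = ⊥
    · exact Or.inl hNbot
    right
    have htop := hw_sup_mlow_eq_top hrep hirr hmax N hNbot (le_trans hNle hwsU) hNH hNP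
    apply le_antisymm hNle
    intro u hu
    have hmem : u ∈ N ⊔ Mlow ρ lam := htop ▸ Submodule.mem_top
    rw [Submodule.mem_sup] at hmem
    obtain ⟨a, ha, b, hb, rfl⟩ := hmem
    have hbU : b ∈ U := by
      have h1 : a + b ∈ U := hwsU hu
      have h2 : a ∈ U := le_trans hNle hwsU ha
      simpa using sub_mem h1 h2
    have hdisj : Disjoint U (Mlow ρ lam) :=
      Module.End.independent_maxGenEigenspace (Hop ρ) lam
    have hb0 : b = 0 := Submodule.disjoint_def.mp hdisj b hbU hb
    rw [hb0, add_zero]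
    exact ha
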